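/- Let u ∈ C²(B) ∩ C⁰(closure B) be a radial function on the unit ball B ⊂ ℝ⁴ with u = 0 on ∂B and Δu ∈ L²(B). Then for all x ∈ B \ {0}, |u(x)| ≤ (−log|x|)^{1/2}/(2√ω₃) · ‖Δu‖_{L²(B)}, where ω₃ = 2π² is the surface area of the unit sphere in ℝ⁴. -/

import Mathlib

open MeasureTheory

noncomputable def ω₃ : ℝ := 2 * Real.pi ^ 2

/-- The radial Laplacian in dimension 4: for a radial function `u(x) = u(|x|)` on the
unit ball of `ℝ⁴`, `Δu(x) = u''(r) + (3/r) u'(r)` with `r = |x|`. -/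
noncomputable def radLap (u : ℝ → ℝ) (r : ℝ) : ℝ :=
  deriv (deriv u) r + 3 / r * deriv u r

/-- `‖Δu‖_{L²(B)}²` for a radial function on the unit ball `B ⊂ ℝ⁴`, written in polar
coordinates: `∫_B |Δu|² dx = ω₃ ∫_0^1 |u''(r) + (3/r)u'(r)|² r³ dr`. -/
noncomputable def radLapNormSq (u : ℝ → ℝ) : ℝ :=
  ω₃ * ∫ r in Set.Ioo (0:ℝ) 1, (radLap u r) ^ 2 * r ^ 3

lemma my_cs {μ : Measure ℝ} {φ ψ : ℝ → ℝ} (hφ : MemLp φ 2 μ) (hψ : MemLp ψ 2 μ) :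
    |∫ x, φ x * ψ x ∂μ| ≤ Real.sqrt (∫ x, φ x ^ 2 ∂μ) * Real.sqrt (∫ x, ψ x ^ 2 ∂μ) := by
  have h1 : |∫ x, φ x * ψ x ∂μ| ≤ ∫ x, ‖φ x‖ * ‖ψ x‖ ∂μ := by
    refine (norm_integral_le_integral_norm (μ := μ) (fun x => φ x * ψ x)).trans
      (le_of_eq (integral_congr_ae ?_))
    filter_upwards with x
    simp [abs_mul]
  refine h1.trans ?_
  have h2 : ENNReal.ofReal (2:ℝ) = 2 := by norm_num
  have := MeasureTheory.integral_mul_norm_le_Lp_mul_Lq (μ := μ) (p := 2) (q := 2)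
    (by constructor <;> norm_num) (h2 ▸ hφ) (h2 ▸ hψ)
  refine this.trans (le_of_eq ?_)
  have e1 : ∀ (f : ℝ → ℝ), (∫ x, ‖f x‖ ^ (2:ℝ) ∂μ) = ∫ x, f x ^ 2 ∂μ := by
    intro f; refine integral_congr_ae ?_; filter_upwards with x
    rw [show ((2:ℝ)) = ((2:ℕ):ℝ) by norm_num, Real.rpow_natCast]
    simp [sq_abs]
  rw [e1, e1, Real.sqrt_eq_rpow, Real.sqrt_eq_rpow]

lemma two_cs {a b X Y : ℝ} (ha : 0 ≤ a) (hb : 0 ≤ b) (hX : 0 ≤ X) (hY : 0 ≤ Y) :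
    a * Real.sqrt X + b * Real.sqrt Y ≤ Real.sqrt (a^2 + b^2) * Real.sqrt (X + Y) := by
  have sX := Real.sq_sqrt hX
  have sY := Real.sq_sqrt hY
  have hsX := Real.sqrt_nonneg X
  have hsY := Real.sqrt_nonneg Y
  have lhs_nonneg : 0 ≤ a * Real.sqrt X + b * Real.sqrt Y := by positivity
  rw [← Real.sqrt_mul (by positivity)]
  rw [show a * Real.sqrt X + b * Real.sqrt Y
      = Real.sqrt ((a * Real.sqrt X + b * Real.sqrt Y)^2) from (Real.sqrt_sq lhs_nonneg).symm]
  apply Real.sqrt_le_sqrt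
  nlinarith [sq_nonneg (a * Real.sqrt Y - b * Real.sqrt X)]

set_option maxHeartbeats 1000000 in
theorem radial_pointwise_estimate (u : ℝ → ℝ)
    (hu : ContDiffOn ℝ 2 u (Set.Ioo 0 1))
    (huc : ContinuousOn u (Set.Icc 0 1))
    (hub : u 1 = 0)
    (hL2 : IntegrableOn (fun r => (radLap u r) ^ 2 * r ^ 3) (Set.Ioo 0 1)) :
    ∀ r ∈ Set.Ioo (0:ℝ) 1,
      |u r| ≤ Real.sqrt (-Real.log r) / (2 * Real.sqrt ω₃) *
        Real.sqrt (radLapNormSq u) := by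
  intro r hr
  obtain ⟨hr0, hr1⟩ := hr
  have hIoo : IsOpen (Set.Ioo (0:ℝ) 1) := isOpen_Ioo
  -- smoothness facts
  have hu1 : ContDiffOn ℝ 1 (deriv u) (Set.Ioo 0 1) := by
    have := hu.deriv_of_isOpen hIoo (m := 1) (by norm_num)
    exact this
  have hd_cont : ContinuousOn (deriv u) (Set.Ioo 0 1) := hu1.continuousOn
  have hdd_cont : ContinuousOn (deriv (deriv u)) (Set.Ioo 0 1) := by
    have := hu1.deriv_of_isOpen hIoo (m := 0) (by norm_num)
    exact this.continuousOn
  have hderiv1 : ∀ t ∈ Set.Ioo (0:ℝ) 1, HasDerivAt u (deriv u t) t := fun t ht =>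
    ((hu.differentiableOn (by norm_num) t ht).differentiableAt (hIoo.mem_nhds ht)).hasDerivAt
  have hderiv2 : ∀ t ∈ Set.Ioo (0:ℝ) 1, HasDerivAt (deriv u) (deriv (deriv u) t) t := fun t ht =>
    ((hu1.differentiableOn (by norm_num) t ht).differentiableAt (hIoo.mem_nhds ht)).hasDerivAt
  have hf_cont : ContinuousOn (radLap u) (Set.Ioo 0 1) := by
    apply hdd_cont.add
    exact (continuousOn_const.div continuousOn_id (fun t ht => ne_of_gt ht.1)).mul hd_cont
  set h : ℝ → ℝ := fun t => t^3 * radLap u t with hh_def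
  have hh_cont : ContinuousOn h (Set.Ioo 0 1) := (continuousOn_pow 3).mul hf_cont
  have hkey : ∀ t ∈ Set.Ioo (0:ℝ) 1, HasDerivAt (fun s => s^3 * deriv u s) (h t) t := by
    intro t ht
    have : HasDerivAt (fun s => s^3 * deriv u s) _ t := (hasDerivAt_pow 3 t).mul (hderiv2 t ht)
    convert this using 1
    have ht0 : t ≠ 0 := ne_of_gt ht.1
    simp only [hh_def, radLap]
    field_simp
    ring
  -- integrability of h on (0,1)
  have hInt : IntegrableOn h (Set.Ioo 0 1) := by
    have hb : IntegrableOn (fun t => ((radLap u t)^2 * t^3 + t^3)/2) (Set.Ioo 0 1) := by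
      apply Integrable.div_const
      exact hL2.add (((continuous_pow 3).integrableOn_Icc (a := 0) (b := 1)).mono_set
        Set.Ioo_subset_Icc_self)
    refine Integrable.mono' hb (hh_cont.aestronglyMeasurable measurableSet_Ioo) ?_
    rw [ae_restrict_iff' measurableSet_Ioo]
    filter_upwards with t ht
    have h1 : (0:ℝ) < t := ht.1
    have h2 : (0:ℝ) < t^3 := by positivity
    rw [Real.norm_eq_abs, hh_def]
    have h3 : |t^3 * radLap u t| = t^3 * |radLap u t| := by
      rw [abs_mul, abs_of_nonneg h2.le]
    rw [h3]
    nlinarith [sq_nonneg (|radLap u t| - 1), sq_abs (radLap u t), abs_nonneg (radLap u t)]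
  -- primitive G
  set G : ℝ → ℝ := fun x => ∫ t in Set.Ioc 0 x, h t with hG_def
  have hIntIcc : IntegrableOn h (Set.Icc 0 1) := by
    rwa [integrableOn_Icc_iff_integrableOn_Ioo]
  have hG_cont : ContinuousOn G (Set.Icc 0 1) :=
    intervalIntegral.continuousOn_primitive hIntIcc
  have hG0 : G 0 = 0 := by simp [hG_def]
  have hII : ∀ x ∈ Set.Ioc (0:ℝ) 1, IntervalIntegrable h volume 0 x := by
    intro x hx
    rw [intervalIntegrable_iff_integrableOn_Ioc_of_le hx.1.le]
    exact hIntIcc.mono_set (Set.Ioc_subset_Icc_self.trans (Set.Icc_subset_Icc le_rfl hx.2))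
  have hG_int : ∀ x ∈ Set.Ioc (0:ℝ) 1, G x = ∫ t in (0:ℝ)..x, h t := by
    intro x hx
    rw [intervalIntegral.integral_of_le hx.1.le]
  have hG_sub : ∀ a ∈ Set.Ioc (0:ℝ) 1, ∀ b ∈ Set.Ioc (0:ℝ) 1,
      G b - G a = ∫ t in a..b, h t := by
    intro a ha b hb
    rw [hG_int a ha, hG_int b hb]
    exact intervalIntegral.integral_interval_sub_left (hII b hb) (hII a ha)
  -- FTC for t^3 u'
  have hFTC : ∀ a ∈ Set.Ioo (0:ℝ) 1, ∀ b ∈ Set.Ioo (0:ℝ) 1,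
      b^3 * deriv u b - a^3 * deriv u a = ∫ t in a..b, h t := by
    intro a ha b hb
    have hsub : Set.uIcc a b ⊆ Set.Ioo (0:ℝ) 1 := by
      exact Set.ordConnected_Ioo.uIcc_subset ha hb
    refine (intervalIntegral.integral_eq_sub_of_hasDerivAt
      (fun x hx => hkey x (hsub hx)) ?_).symm
    exact (hh_cont.mono hsub).intervalIntegrable
  set C : ℝ := (1/2:ℝ)^3 * deriv u (1/2) - G (1/2) with hC_def
  have half_mem : (1/2:ℝ) ∈ Set.Ioo (0:ℝ) 1 := by norm_num
  have hC : ∀ t ∈ Set.Ioo (0:ℝ) 1, t^3 * deriv u t = G t + C := by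
    intro t ht
    have h1 := hFTC t ht (1/2) half_mem
    have h2 := hG_sub t ⟨ht.1, ht.2.le⟩ (1/2) ⟨by norm_num, by norm_num⟩
    rw [← h2] at h1
    rw [hC_def]
    linarith
  clear_value C
  have hC0 : C = 0 := by
    by_contra hCne
    have hCpos : 0 < |C| := abs_pos.mpr hCne
    obtain ⟨M, hM⟩ := isCompact_Icc.exists_bound_of_continuousOn huc
    have hM' : ∀ x ∈ Set.Icc (0:ℝ) 1, |u x| ≤ M := fun x hx => by
      simpa [Real.norm_eq_abs] using hM x hx
    have hM0 : 0 ≤ M := le_trans (abs_nonneg _) (hM' 1 (by norm_num))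
    have hGc0 : ContinuousWithinAt G (Set.Icc 0 1) 0 := hG_cont 0 (by norm_num)
    have htend : Filter.Tendsto G (nhdsWithin 0 (Set.Icc 0 1)) (nhds 0) := by
      have := hGc0.tendsto
      rwa [hG0] at this
    have hball : Metric.ball (0:ℝ) (|C|/2) ∈ nhds (0:ℝ) :=
      Metric.ball_mem_nhds _ (by positivity)
    obtain ⟨ε, hε, hsub⟩ := Metric.mem_nhdsWithin_iff.mp (htend hball)
    set δ : ℝ := min (ε/2) (1/2) with hδ_def
    have hδ0 : 0 < δ := lt_min (by positivity) (by norm_num)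
    have hδhalf : δ ≤ 1/2 := min_le_right _ _
    have hδ1 : δ < 1 := lt_of_le_of_lt hδhalf (by norm_num)
    have hGsmall : ∀ t, 0 < t → t ≤ δ → |G t| ≤ |C|/2 := by
      intro t ht0 htδ
      have h1 : t ∈ Metric.ball (0:ℝ) ε := by
        rw [Metric.mem_ball, Real.dist_eq, sub_zero, abs_of_pos ht0]
        exact lt_of_le_of_lt (htδ.trans (min_le_left _ _)) (by linarith)
      have h2 : t ∈ Set.Icc (0:ℝ) 1 := ⟨ht0.le, by linarith [htδ.trans hδhalf]⟩
      have := hsub ⟨h1, h2⟩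
      rw [Set.mem_preimage, Metric.mem_ball, Real.dist_eq, sub_zero] at this
      exact this.le
    -- choose small ε'
    set K : ℝ := (8*M + 4)/|C| + δ⁻¹^2 with hK_def
    have hK0 : 0 < K := by
      have : 0 < (8*M + 4)/|C| := by positivity
      have : 0 < δ⁻¹^2 := by positivity
      positivity
    set e : ℝ := min (δ/2) (Real.sqrt (1/K)) with he_def
    have he0 : 0 < e := lt_min (by positivity) (Real.sqrt_pos.mpr (by positivity))
    have heδ : e < δ := lt_of_le_of_lt (min_le_left _ _) (by linarith)
    have heK : K ≤ e⁻¹^2 := by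
      have h1 : e ≤ Real.sqrt (1/K) := min_le_right _ _
      have h2 : e^2 ≤ 1/K := by
        calc e^2 ≤ Real.sqrt (1/K)^2 := by
              apply pow_le_pow_left₀ he0.le h1
          _ = 1/K := Real.sq_sqrt (by positivity)
      have h3 : K * e^2 ≤ 1 := by
        calc K * e^2 ≤ K * (1/K) := mul_le_mul_of_nonneg_left h2 hK0.le
          _ = 1 := mul_one_div_cancel hK0.ne'
      rw [inv_pow, ← one_div, le_div_iff₀ (by positivity)]
      exact h3
    clear_value δ K e
    -- FTC for u on [e, δ]
    have hsub2 : Set.uIcc e δ ⊆ Set.Ioo (0:ℝ) 1 := by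
      rw [Set.uIcc_of_le heδ.le]
      intro x hx
      exact ⟨lt_of_lt_of_le he0 hx.1, lt_of_le_of_lt hx.2 hδ1⟩
    have hu_cont : IntervalIntegrable (deriv u) volume e δ :=
      (hd_cont.mono hsub2).intervalIntegrable
    have hFTCu : ∫ t in e..δ, deriv u t = u δ - u e :=
      intervalIntegral.integral_eq_sub_of_hasDerivAt
        (fun x hx => hderiv1 x (hsub2 hx)) hu_cont
    -- rewrite integrand
    have hIcc_sub : Set.Icc e δ ⊆ Set.Ioo (0:ℝ) 1 := by
      rw [← Set.uIcc_of_le heδ.le]; exact hsub2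
    have hGt_cont : ContinuousOn (fun t => G t / t^3) (Set.Icc e δ) := by
      apply ContinuousOn.div
      · exact (hG_cont.mono (fun x hx => ⟨(hIcc_sub hx).1.le, (hIcc_sub hx).2.le⟩))
      · exact (continuousOn_pow 3)
      · intro x hx
        exact pow_ne_zero 3 (ne_of_gt (hIcc_sub hx).1)
    have hzpow_cont : ContinuousOn (fun t : ℝ => t^(-3:ℤ)) (Set.Icc e δ) := by
      apply ContinuousOn.zpow₀ continuousOn_id
      intro x hx
      exact Or.inl (ne_of_gt (hIcc_sub hx).1)
    have hint1 : IntervalIntegrable (fun t => G t / t^3) volume e δ := by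
      rw [intervalIntegrable_iff_integrableOn_Icc_of_le heδ.le]
      exact hGt_cont.integrableOn_compact isCompact_Icc
    have hint2 : IntervalIntegrable (fun t : ℝ => t^(-3:ℤ)) volume e δ := by
      rw [intervalIntegrable_iff_integrableOn_Icc_of_le heδ.le]
      exact hzpow_cont.integrableOn_compact isCompact_Icc
    have hsplit : ∫ t in e..δ, deriv u t
        = (∫ t in e..δ, G t / t^3) + C * ∫ t in e..δ, (t:ℝ)^(-3:ℤ) := by
      rw [← intervalIntegral.integral_const_mul,
        ← intervalIntegral.integral_add hint1 (hint2.const_mul C)]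
      apply intervalIntegral.integral_congr
      intro x hx
      have hx' := hsub2 hx
      have hx0 : x ≠ 0 := ne_of_gt hx'.1
      have hxC := hC x hx'
      have hux : deriv u x = (G x + C)/x^3 := by
        rw [eq_div_iff (pow_ne_zero 3 hx0)]; linarith
      show deriv u x = G x / x ^ 3 + C * x ^ (-3:ℤ)
      rw [hux, zpow_neg, show ((3:ℤ) = ((3:ℕ):ℤ)) from rfl, zpow_natCast, ← one_div]
      field_simp
    -- compute the zpow integral
    have hPval : ∫ t in e..δ, (t:ℝ)^(-3:ℤ) = (e⁻¹^2 - δ⁻¹^2)/2 := by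
      have hnm : (0:ℝ) ∉ Set.uIcc e δ := by
        rw [Set.uIcc_of_le heδ.le]
        intro hmem
        exact absurd hmem.1 (not_le.mpr he0)
      rw [integral_zpow (Or.inr ⟨by norm_num, hnm⟩)]
      rw [show ((-3:ℤ)+(1:ℤ)) = -((2:ℕ):ℤ) from rfl, zpow_neg, zpow_neg,
        zpow_natCast, zpow_natCast]
      norm_num
      ring
    set P : ℝ := ∫ t in e..δ, (t:ℝ)^(-3:ℤ) with hP_def
    have hPbound : (8*M + 4)/|C| ≤ 2 * P := by
      rw [hPval]
      have : K - δ⁻¹^2 ≤ e⁻¹^2 - δ⁻¹^2 := by linarith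
      rw [hK_def] at this
      linarith
    -- bound the G-part
    have hQbound : |∫ t in e..δ, G t / t^3| ≤ |C|/2 * P := by
      have habs : |∫ t in e..δ, G t / t^3| ≤ ∫ t in e..δ, |G t / t^3| :=
        intervalIntegral.abs_integral_le_integral_abs heδ.le
      refine habs.trans ?_
      have : |C|/2 * P = ∫ t in e..δ, |C|/2 * (t:ℝ)^(-3:ℤ) := by
        rw [intervalIntegral.integral_const_mul]
      rw [this]
      apply intervalIntegral.integral_mono_on heδ.le hint1.abs (hint2.const_mul _)
      intro x hx
      have hx' : (0:ℝ) < x := lt_of_lt_of_le he0 hx.1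
      rw [abs_div, abs_of_nonneg (by positivity : (0:ℝ) ≤ x^3)]
      rw [zpow_neg, ← one_div]
      rw [div_le_iff₀ (by positivity)]
      have hGx : |G x| ≤ |C|/2 := hGsmall x hx' hx.2
      calc |G x| ≤ |C|/2 := hGx
        _ = |C|/2 * 1 := (mul_one _).symm
        _ ≤ |C|/2 * (1 / x ^ 3 * x ^ 3) := by
            rw [one_div_mul_cancel (by positivity : (x:ℝ)^3 ≠ 0)]
        _ = |C|/2 * (1/x^3) * x^3 := by ring
    have hP0 : 0 ≤ P := by
      have hpos : 0 < (8*M + 4)/|C| := div_pos (by linarith) hCpos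
      linarith
    -- contradiction
    have hlow : |C| * P / 2 ≤ |u δ - u e| := by
      rw [← hFTCu, hsplit]
      have h1 : |C * P| - |∫ t in e..δ, G t / t^3| ≤ |(∫ t in e..δ, G t / t^3) + C * P| := by
        have := abs_sub_abs_le_abs_sub (C * P) (-(∫ t in e..δ, G t / t^3))
        rwa [abs_neg, sub_neg_eq_add, add_comm] at this
      rw [abs_mul, abs_of_nonneg hP0] at h1
      linarith [hQbound]
    have hup : |u δ - u e| ≤ 2 * M := by
      have h1 := hM' δ ⟨hδ0.le, hδ1.le⟩
      have h2 := hM' e ⟨he0.le, by linarith⟩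
      have h3 : |u δ - u e| ≤ |u δ| + |u e| := by
        have := abs_add_le (u δ) (-(u e))
        rwa [← sub_eq_add_neg, abs_neg] at this
      linarith
    have hfinal : 2*M + 1 ≤ |C| * P / 2 := by
      have h1 : (8*M + 4) ≤ 2 * P * |C| := by
        rw [div_le_iff₀ hCpos] at hPbound
        linarith
      linarith
    linarith
  have hu' : ∀ t ∈ Set.Ioo (0:ℝ) 1, deriv u t = G t / t^3 := by
    intro t ht
    have := hC t ht
    rw [hC0, add_zero] at this
    rw [eq_div_iff (pow_ne_zero 3 (ne_of_gt ht.1))]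
    linarith
  -- ================= final part =================
  have hr01 : r ∈ Set.Ioo (0:ℝ) 1 := ⟨hr0, hr1⟩
  have hIccr1 : Set.Icc r 1 ⊆ Set.Icc (0:ℝ) 1 := Set.Icc_subset_Icc hr0.le le_rfl
  have hGr1_cont : ContinuousOn G (Set.Icc r 1) := hG_cont.mono hIccr1
  set v : ℝ → ℝ := fun t => G t / t^3 with hv_def
  have hv_cont : ContinuousOn v (Set.Icc r 1) := by
    apply hGr1_cont.div (continuousOn_pow 3)
    intro x hx
    exact pow_ne_zero 3 (ne_of_gt (lt_of_lt_of_le hr0 hx.1))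
  have hvder : ∀ x ∈ Set.Ioo r 1, HasDerivAt u (v x) x := by
    intro x hx
    have hx' : x ∈ Set.Ioo (0:ℝ) 1 := ⟨lt_trans hr0 hx.1, hx.2⟩
    have := hderiv1 x hx'
    rwa [hu' x hx'] at this
  have hvint : IntervalIntegrable v volume r 1 := by
    rw [intervalIntegrable_iff_integrableOn_Icc_of_le hr1.le]
    exact hv_cont.integrableOn_compact isCompact_Icc
  have hFTC2 : ∫ t in r..1, v t = u 1 - u r :=
    intervalIntegral.integral_eq_sub_of_hasDerivAt_of_le hr1.le (huc.mono hIccr1) hvder hvint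
  have hur : u r = -(∫ t in r..1, v t) := by rw [hFTC2, hub]; ring
  -- derivative of G
  have hGder : ∀ x ∈ Set.Ioo (0:ℝ) 1, HasDerivAt G (h x) x := by
    intro x hx
    have hcont : ContinuousAt h x := hh_cont.continuousAt (hIoo.mem_nhds hx)
    have hder1 : HasDerivAt (fun y => ∫ t in (0:ℝ)..y, h t) (h x) x :=
      intervalIntegral.integral_hasDerivAt_right (hII x ⟨hx.1, hx.2.le⟩)
        (hh_cont.stronglyMeasurableAtFilter hIoo x hx) hcont
    apply hder1.congr_of_eventuallyEq
    filter_upwards [hIoo.mem_nhds hx] with y hy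
    rw [hG_def]
    exact (intervalIntegral.integral_of_le hy.1.le).symm
  -- H and integration by parts
  set H : ℝ → ℝ := fun t => ((t^2)⁻¹ - 1)/2 with hH_def
  have hH_cont : ContinuousOn H (Set.Icc r 1) := by
    apply ContinuousOn.div_const
    apply ContinuousOn.sub _ continuousOn_const
    apply ContinuousOn.inv₀ (continuousOn_pow 2)
    intro x hx
    exact pow_ne_zero 2 (ne_of_gt (lt_of_lt_of_le hr0 hx.1))
  have hHder : ∀ x ∈ Set.Ioo (0:ℝ) 1, HasDerivAt H (-(x^3)⁻¹) x := by
    intro x hx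
    have hx0 : x ≠ 0 := ne_of_gt hx.1
    have h1 : HasDerivAt (fun t : ℝ => t^2) (2*x) x := by
      simpa using hasDerivAt_pow 2 x
    have h2 : HasDerivAt (fun t : ℝ => (t^2)⁻¹) (-(2*x) / ((x^2)^2)) x :=
      h1.inv (pow_ne_zero 2 hx0)
    have h3 : HasDerivAt H _ x := (h2.sub_const 1).div_const 2
    convert h3 using 1
    field_simp
  have hFder : ∀ x ∈ Set.Ioo r 1, HasDerivAt (fun t => H t * G t)
      (-(x^3)⁻¹ * G x + H x * h x) x := by
    intro x hx
    have hx' : x ∈ Set.Ioo (0:ℝ) 1 := ⟨lt_trans hr0 hx.1, hx.2⟩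
    exact (hHder x hx').mul (hGder x hx')
  have hHG_cont : ContinuousOn (fun t => H t * G t) (Set.Icc r 1) := hH_cont.mul hGr1_cont
  have hpart1 : IntervalIntegrable (fun t => -((t:ℝ)^3)⁻¹ * G t) volume r 1 := by
    rw [intervalIntegrable_iff_integrableOn_Icc_of_le hr1.le]
    apply ContinuousOn.integrableOn_compact isCompact_Icc
    apply ContinuousOn.mul _ hGr1_cont
    apply ContinuousOn.neg
    apply ContinuousOn.inv₀ (continuousOn_pow 3)
    intro x hx
    exact pow_ne_zero 3 (ne_of_gt (lt_of_lt_of_le hr0 hx.1))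
  have hIoo_r1 : Set.Ioo r 1 ⊆ Set.Ioo (0:ℝ) 1 := fun x hx => ⟨lt_trans hr0 hx.1, hx.2⟩
  have hHbound : ∀ x ∈ Set.Ioo r 1, 0 ≤ H x ∧ H x ≤ ((r^2)⁻¹)/2 := by
    intro x hx
    have hx0 : 0 < x := lt_trans hr0 hx.1
    have hx1 : x ≤ 1 := hx.2.le
    have h1 : x^2 ≤ 1 := by nlinarith
    have h2 : r^2 ≤ x^2 := by nlinarith [hx.1]
    have h3 : (1:ℝ) ≤ (x^2)⁻¹ := by
      rw [le_inv_comm₀ (by norm_num) (by positivity)]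
      simpa using h1
    have h4 : (x^2)⁻¹ ≤ (r^2)⁻¹ := by
      apply inv_anti₀ (by positivity) h2
    constructor
    · rw [hH_def]; simp only []; linarith
    · rw [hH_def]; simp only []; linarith
  have hpart2 : IntervalIntegrable (fun t => H t * h t) volume r 1 := by
    rw [intervalIntegrable_iff_integrableOn_Ioo_of_le hr1.le]
    have hb : IntegrableOn (fun t => ((r^2)⁻¹)/2 * |h t|) (Set.Ioo r 1) :=
      ((hInt.mono_set hIoo_r1).abs.const_mul _)
    refine Integrable.mono' hb ?_ ?_
    · apply ContinuousOn.aestronglyMeasurable _ measurableSet_Ioo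
      exact (hH_cont.mono (fun x hx => ⟨hx.1.le, hx.2.le⟩)).mul (hh_cont.mono hIoo_r1)
    · rw [ae_restrict_iff' measurableSet_Ioo]
      filter_upwards with x hx
      obtain ⟨hH0, hHr⟩ := hHbound x hx
      rw [Real.norm_eq_abs, abs_mul, abs_of_nonneg hH0]
      apply mul_le_mul_of_nonneg_right hHr (abs_nonneg _)
  have hIBP : (∫ t in r..1, (-((t:ℝ)^3)⁻¹ * G t + H t * h t)) = -(H r * G r) := by
    rw [intervalIntegral.integral_eq_sub_of_hasDerivAt_of_le hr1.le hHG_cont hFder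
      (hpart1.add hpart2)]
    have hH1 : H 1 = 0 := by rw [hH_def]; norm_num
    rw [hH1]
    ring
  have hvHh : ∫ t in r..1, v t = H r * G r + ∫ t in r..1, H t * h t := by
    have h1 := intervalIntegral.integral_add hpart1 hpart2
    rw [hIBP] at h1
    have h2 : (∫ t in r..1, -((t:ℝ)^3)⁻¹ * G t) = -(∫ t in r..1, v t) := by
      rw [← intervalIntegral.integral_neg]
      apply intervalIntegral.integral_congr
      intro x hx
      rw [hv_def]
      simp only []
      rw [div_eq_mul_inv]
      ring
    rw [h2] at h1
    linarith
  have hHr0 : 0 ≤ H r := by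
    have h1 : r^2 ≤ 1 := by nlinarith
    have h3 : (1:ℝ) ≤ (r^2)⁻¹ := by
      rw [le_inv_comm₀ (by norm_num) (by positivity)]
      simpa using h1
    rw [hH_def]; simp only []; linarith
  have hmain : |u r| ≤ H r * |G r| + |∫ t in r..1, H t * h t| := by
    rw [hur, hvHh, abs_neg]
    refine (abs_add_le _ _).trans ?_
    rw [abs_mul, abs_of_nonneg hHr0]
  -- ============ Cauchy-Schwarz estimates ============
  set W : ℝ → ℝ := fun t => radLap u t * (t * Real.sqrt t) with hW_def
  set Φ : ℝ → ℝ := fun t => t * Real.sqrt t with hΦ_def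
  have hΦ_cont : Continuous Φ := continuous_id.mul Real.continuous_sqrt
  have hW_cont : ContinuousOn W (Set.Ioo (0:ℝ) 1) :=
    hf_cont.mul (hΦ_cont.continuousOn)
  have hW_mem : ∀ s : Set ℝ, MeasurableSet s → s ⊆ Set.Ioo (0:ℝ) 1 →
      MemLp W 2 (volume.restrict s) := by
    intro s hms hsub
    refine (memLp_two_iff_integrable_sq ?_).2 ?_
    · exact (hW_cont.mono hsub).aestronglyMeasurable hms
    · refine (hL2.mono_set hsub).congr_fun ?_ hms
      intro x hx
      have hx0 : (0:ℝ) ≤ x := (hsub hx).1.le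
      show (radLap u x)^2 * x^3 = (W x)^2
      rw [hW_def]
      have e1 : (radLap u x * (x * Real.sqrt x))^2
          = (radLap u x)^2 * (x^2 * Real.sqrt x^2) := by ring
      rw [e1, Real.sq_sqrt hx0]
      ring
  have hΦ_mem : ∀ s : Set ℝ, MeasurableSet s → s ⊆ Set.Ioo (0:ℝ) 1 →
      MemLp Φ 2 (volume.restrict s) := by
    intro s hms hsub
    refine (memLp_two_iff_integrable_sq ?_).2 ?_
    · exact (hΦ_cont.continuousOn.mono hsub).aestronglyMeasurable hms
    · refine IntegrableOn.mono_set ?_ (hsub.trans Set.Ioo_subset_Icc_self)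
      exact ((hΦ_cont.pow 2).continuousOn).integrableOn_compact isCompact_Icc
  set I₁ : ℝ := ∫ t in Set.Ioo (0:ℝ) r, (radLap u t)^2 * t^3 with hI1_def
  set I₂ : ℝ := ∫ t in Set.Ioo r 1, (radLap u t)^2 * t^3 with hI2_def
  set I : ℝ := ∫ t in Set.Ioo (0:ℝ) 1, (radLap u t)^2 * t^3 with hI_def
  have hq_nonneg : ∀ (s : Set ℝ), MeasurableSet s → s ⊆ Set.Ioo (0:ℝ) 1 →
      0 ≤ ∫ t in s, (radLap u t)^2 * t^3 := by
    intro s hms hsub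
    apply setIntegral_nonneg hms
    intro x hx
    have hx0 : (0:ℝ) ≤ x := (hsub hx).1.le
    positivity
  have hsub01 : Set.Ioo (0:ℝ) r ⊆ Set.Ioo (0:ℝ) 1 := fun x hx => ⟨hx.1, lt_trans hx.2 hr1⟩
  have hI1_nonneg : 0 ≤ I₁ := hq_nonneg _ measurableSet_Ioo hsub01
  have hI2_nonneg : 0 ≤ I₂ := hq_nonneg _ measurableSet_Ioo hIoo_r1
  -- bound for G r
  have hGr_cs : |G r| ≤ r^2/2 * Real.sqrt I₁ := by
    have h0 : G r = ∫ t in Set.Ioo (0:ℝ) r, h t := by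
      rw [hG_def]
      exact MeasureTheory.integral_Ioc_eq_integral_Ioo
    have h1 : (∫ t in Set.Ioo (0:ℝ) r, h t) = ∫ t in Set.Ioo (0:ℝ) r, Φ t * W t := by
      apply setIntegral_congr_fun measurableSet_Ioo
      intro x hx
      have hx0 : (0:ℝ) ≤ x := hx.1.le
      show h x = Φ x * W x
      rw [hh_def, hΦ_def, hW_def]
      have e1 : x * Real.sqrt x * (radLap u x * (x * Real.sqrt x))
          = radLap u x * (x^2 * Real.sqrt x^2) := by ring
      show x ^ 3 * radLap u x = x * Real.sqrt x * (radLap u x * (x * Real.sqrt x))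
      rw [e1, Real.sq_sqrt hx0]
      ring
    have h2 : (∫ t in Set.Ioo (0:ℝ) r, Φ t ^ 2) = r^4/4 := by
      have e2 : Set.EqOn (fun t => Φ t ^2) (fun t => t^3) (Set.Ioo 0 r) := by
        intro x hx
        have hx0 : (0:ℝ) ≤ x := hx.1.le
        show Φ x ^ 2 = x ^ 3
        rw [hΦ_def]
        show (x * Real.sqrt x)^2 = x^3
        rw [mul_pow, Real.sq_sqrt hx0]
        ring
      rw [setIntegral_congr_fun measurableSet_Ioo e2,
        ← MeasureTheory.integral_Ioc_eq_integral_Ioo,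
        ← intervalIntegral.integral_of_le hr0.le, integral_pow]
      norm_num
    have h3 := my_cs (hΦ_mem _ measurableSet_Ioo hsub01) (hW_mem _ measurableSet_Ioo hsub01)
    have eW : (∫ t in Set.Ioo (0:ℝ) r, W t ^ 2) = I₁ := by
      rw [hI1_def]
      apply setIntegral_congr_fun measurableSet_Ioo
      intro x hx
      have hx0 : (0:ℝ) ≤ x := hx.1.le
      show W x ^2 = (radLap u x)^2 * x^3
      rw [hW_def]
      show (radLap u x * (x * Real.sqrt x))^2 = (radLap u x)^2 * x^3
      rw [mul_pow, mul_pow, Real.sq_sqrt hx0]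
      ring
    have e4 : Real.sqrt (r^4/4) = r^2/2 := by
      rw [show r^4/4 = (r^2/2)^2 by ring]
      exact Real.sqrt_sq (by positivity)
    rw [h0, h1]
    refine h3.trans (le_of_eq ?_)
    rw [h2, eW, e4]
  -- bound for the H*h integral
  set J : ℝ := ∫ t in Set.Ioo r 1, (H t)^2 * t^3 with hJ_def
  have hJ_nonneg : 0 ≤ J := by
    apply setIntegral_nonneg measurableSet_Ioo
    intro x hx
    have hx0 : (0:ℝ) ≤ x := (hIoo_r1 hx).1.le
    positivity
  have hHh_cs : |∫ t in r..1, H t * h t| ≤ Real.sqrt J * Real.sqrt I₂ := by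
    have h0 : (∫ t in r..1, H t * h t) = ∫ t in Set.Ioo r 1, H t * h t := by
      rw [intervalIntegral.integral_of_le hr1.le]
      exact MeasureTheory.integral_Ioc_eq_integral_Ioo
    have h1 : (∫ t in Set.Ioo r 1, H t * h t) = ∫ t in Set.Ioo r 1, (fun t => H t * Φ t) t * W t := by
      apply setIntegral_congr_fun measurableSet_Ioo
      intro x hx
      have hx0 : (0:ℝ) ≤ x := (hIoo_r1 hx).1.le
      show H x * h x = H x * Φ x * W x
      rw [hh_def, hΦ_def, hW_def]
      show H x * (x ^ 3 * radLap u x) = H x * (x * Real.sqrt x) * (radLap u x * (x * Real.sqrt x))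
      have e1 : H x * (x * Real.sqrt x) * (radLap u x * (x * Real.sqrt x))
          = H x * radLap u x * (x^2 * Real.sqrt x^2) := by ring
      rw [e1, Real.sq_sqrt hx0]
      ring
    have hHΦ_mem : MemLp (fun t => H t * Φ t) 2 (volume.restrict (Set.Ioo r 1)) := by
      refine (memLp_two_iff_integrable_sq ?_).2 ?_
      · apply ContinuousOn.aestronglyMeasurable _ measurableSet_Ioo
        exact (hH_cont.mono Set.Ioo_subset_Icc_self).mul
          (hΦ_cont.continuousOn.mono (hIoo_r1.trans Set.Ioo_subset_Icc_self))
      · refine IntegrableOn.mono_set ?_ (Set.Ioo_subset_Icc_self)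
        exact ((hH_cont.mul (hΦ_cont.continuousOn.mono hIccr1)).pow 2).integrableOn_compact
          isCompact_Icc
    have h3 := my_cs hHΦ_mem (hW_mem _ measurableSet_Ioo hIoo_r1)
    have eHΦ : (∫ t in Set.Ioo r 1, (H t * Φ t) ^ 2) = J := by
      rw [hJ_def]
      apply setIntegral_congr_fun measurableSet_Ioo
      intro x hx
      have hx0 : (0:ℝ) ≤ x := (hIoo_r1 hx).1.le
      show (H x * Φ x) ^2 = (H x)^2 * x^3
      rw [hΦ_def]
      show (H x * (x * Real.sqrt x))^2 = (H x)^2 * x^3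
      rw [mul_pow, mul_pow, Real.sq_sqrt hx0]
      ring
    have eW : (∫ t in Set.Ioo r 1, W t ^ 2) = I₂ := by
      rw [hI2_def]
      apply setIntegral_congr_fun measurableSet_Ioo
      intro x hx
      have hx0 : (0:ℝ) ≤ x := (hIoo_r1 hx).1.le
      show W x ^2 = (radLap u x)^2 * x^3
      rw [hW_def]
      show (radLap u x * (x * Real.sqrt x))^2 = (radLap u x)^2 * x^3
      rw [mul_pow, mul_pow, Real.sq_sqrt hx0]
      ring
    rw [h0, h1]
    refine h3.trans (le_of_eq ?_)
    rw [eHΦ, eW]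
  -- value of J
  have hJval : J = (1/4) * (-Real.log r - (1 - r^2) + (1 - r^4)/4) := by
    have h0 : J = ∫ t in r..1, (H t)^2 * t^3 := by
      rw [hJ_def, intervalIntegral.integral_of_le hr1.le,
        MeasureTheory.integral_Ioc_eq_integral_Ioo]
    have h1 : ∀ x ∈ Set.uIcc r 1, (H x)^2 * x^3 = (1/4) * (x⁻¹ - 2*x + x^3) := by
      intro x hx
      rw [Set.uIcc_of_le hr1.le] at hx
      have hx0 : 0 < x := lt_of_lt_of_le hr0 hx.1
      have hx0' : x ≠ 0 := ne_of_gt hx0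
      rw [hH_def]
      show (((x^2)⁻¹ - 1)/2)^2 * x^3 = (1/4) * (x⁻¹ - 2*x + x^3)
      field_simp
      ring
    rw [h0, intervalIntegral.integral_congr h1, intervalIntegral.integral_const_mul]
    have hi1 : IntervalIntegrable (fun x : ℝ => x⁻¹) volume r 1 := by
      apply ContinuousOn.intervalIntegrable
      apply ContinuousOn.inv₀ continuousOn_id
      intro x hx
      rw [Set.uIcc_of_le hr1.le] at hx
      exact ne_of_gt (lt_of_lt_of_le hr0 hx.1)
    have hi2 : IntervalIntegrable (fun x : ℝ => 2*x) volume r 1 :=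
      (continuous_const.mul continuous_id).intervalIntegrable _ _
    have hi3 : IntervalIntegrable (fun x : ℝ => x^3) volume r 1 :=
      (continuous_pow 3).intervalIntegrable _ _
    rw [intervalIntegral.integral_add (hi1.sub hi2) hi3, intervalIntegral.integral_sub hi1 hi2]
    have hnm : (0:ℝ) ∉ Set.uIcc r 1 := by
      rw [Set.uIcc_of_le hr1.le]
      intro hmem
      exact absurd hmem.1 (not_le.mpr hr0)
    have hlog : Real.log (1/r) = -Real.log r := by rw [one_div, Real.log_inv]
    rw [integral_inv hnm, intervalIntegral.integral_const_mul, integral_id, integral_pow, hlog]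
    norm_num
    ring
  -- I₁ + I₂ = I
  have hIsum : I₁ + I₂ = I := by
    have key : ∀ a b : ℝ, 0 ≤ a → a ≤ b → b ≤ 1 →
        IntervalIntegrable (fun t => (radLap u t)^2 * t^3) volume a b := by
      intro a b ha hab hb
      rw [intervalIntegrable_iff_integrableOn_Ioo_of_le hab]
      exact hL2.mono_set (fun x hx => ⟨lt_of_le_of_lt ha hx.1, lt_of_lt_of_le hx.2 hb⟩)
    have h1 := intervalIntegral.integral_add_adjacent_intervals
      (key 0 r le_rfl hr0.le hr1.le) (key r 1 hr0.le hr1.le le_rfl)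
    have conv : ∀ a b : ℝ, a ≤ b → (∫ t in a..b, (radLap u t)^2 * t^3)
        = ∫ t in Set.Ioo a b, (radLap u t)^2 * t^3 := by
      intro a b hab
      rw [intervalIntegral.integral_of_le hab]
      exact MeasureTheory.integral_Ioc_eq_integral_Ioo
    rw [conv 0 r hr0.le, conv r 1 hr1.le, conv 0 1 (by norm_num)] at h1
    rw [hI1_def, hI2_def, hI_def]
    exact h1
  -- final assembly
  have hL0 : 0 ≤ -Real.log r := by
    have := Real.log_nonpos hr0.le hr1.le
    linarith
  have ha_eq : H r * (r^2/2) = (1 - r^2)/4 := by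
    have hr0' : r ≠ 0 := ne_of_gt hr0
    rw [hH_def]
    show ((r^2)⁻¹ - 1)/2 * (r^2/2) = (1 - r^2)/4
    field_simp
    ring
  have step1 : |u r| ≤ (1-r^2)/4 * Real.sqrt I₁ + Real.sqrt J * Real.sqrt I₂ := by
    refine hmain.trans ?_
    have t1 : H r * |G r| ≤ H r * (r^2/2 * Real.sqrt I₁) :=
      mul_le_mul_of_nonneg_left hGr_cs hHr0
    have t2 : H r * (r^2/2 * Real.sqrt I₁) = (1-r^2)/4 * Real.sqrt I₁ := by
      rw [← mul_assoc, ha_eq]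
    linarith [hHh_cs]
  have step2 : (1-r^2)/4 * Real.sqrt I₁ + Real.sqrt J * Real.sqrt I₂
      ≤ Real.sqrt (((1-r^2)/4)^2 + J) * Real.sqrt (I₁ + I₂) := by
    have h2 := two_cs (a := (1-r^2)/4) (b := Real.sqrt J)
      (by nlinarith [hr0.le, hr1.le]) (Real.sqrt_nonneg J) hI1_nonneg hI2_nonneg
    rwa [Real.sq_sqrt hJ_nonneg] at h2
  have step3 : ((1-r^2)/4)^2 + J ≤ (-Real.log r)/4 := by
    rw [hJval]
    nlinarith [sq_nonneg r, hr1.le, hr0.le, sq_nonneg (1 - r^2)]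
  have step4 : Real.sqrt (((1-r^2)/4)^2 + J) ≤ Real.sqrt (-Real.log r) / 2 := by
    refine (Real.sqrt_le_sqrt step3).trans (le_of_eq ?_)
    rw [show (-Real.log r)/4 = (Real.sqrt (-Real.log r)/2)^2 by
      rw [div_pow, Real.sq_sqrt hL0]; norm_num]
    exact Real.sqrt_sq (by positivity)
  have hω₃pos : (0:ℝ) < ω₃ := by
    show (0:ℝ) < 2 * Real.pi ^ 2
    positivity
  have hIformula : radLapNormSq u = ω₃ * I := by
    rw [hI_def]
    rfl
  have hI_nonneg : 0 ≤ I := hq_nonneg _ measurableSet_Ioo (fun x hx => hx)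
  calc |u r| ≤ (1-r^2)/4 * Real.sqrt I₁ + Real.sqrt J * Real.sqrt I₂ := step1
    _ ≤ Real.sqrt (((1-r^2)/4)^2 + J) * Real.sqrt (I₁ + I₂) := step2
    _ = Real.sqrt (((1-r^2)/4)^2 + J) * Real.sqrt I := by rw [hIsum]
    _ ≤ Real.sqrt (-Real.log r) / 2 * Real.sqrt I :=
        mul_le_mul_of_nonneg_right step4 (Real.sqrt_nonneg I)
    _ = Real.sqrt (-Real.log r) / (2 * Real.sqrt ω₃) * Real.sqrt (radLapNormSq u) := by
        rw [hIformula, Real.sqrt_mul hω₃pos.le]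
        have hsω : Real.sqrt ω₃ ≠ 0 := ne_of_gt (Real.sqrt_pos.mpr hω₃pos)
        field_simp
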